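/- If P(x) = (x − x_n) * ⋯ * (x − x_1) is a factorization of a monic P ∈ ℍ[x] into linear factors, then each congruence class [x_i], i = 1, …, n, contains at least one zero of P. -/

import Mathlib

open Polynomial

noncomputable section

private lemma myConjPow (c t : Quaternion ℝ) (hc : c ≠ 0) (k : ℕ) :
    (c * t * c⁻¹) ^ k = c * t ^ k * c⁻¹ := by
  induction k with
  | zero => simp [mul_inv_cancel₀ hc]
  | succ k ih =>
      rw [pow_succ, ih]
      have h1 : c⁻¹ * (c * t * c⁻¹) = t * c⁻¹ := by
        rw [← mul_assoc, ← mul_assoc, inv_mul_cancel₀ hc, one_mul]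
      rw [mul_assoc (c * t ^ k), h1, pow_succ]
      noncomm_ring

private lemma evalA (p q : Polynomial (Quaternion ℝ)) (t : Quaternion ℝ)
    (h : q.eval t = 0) : (p * q).eval t = 0 := by
  induction p using Polynomial.induction_on' with
  | add f g hf hg => rw [add_mul, eval_add, hf, hg, add_zero]
  | monomial k a =>
      rw [← C_mul_X_pow_eq_monomial, mul_assoc, X_pow_mul, eval_C_mul,
        eval_mul_X_pow, h, zero_mul, mul_zero]

private lemma evalB (p q : Polynomial (Quaternion ℝ)) (t : Quaternion ℝ)
    (hc : q.eval t ≠ 0) :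
    (p * q).eval t = p.eval (q.eval t * t * (q.eval t)⁻¹) * q.eval t := by
  induction p using Polynomial.induction_on' with
  | add f g hf hg => rw [add_mul, eval_add, hf, hg, eval_add, add_mul]
  | monomial k a =>
      rw [← C_mul_X_pow_eq_monomial, mul_assoc, X_pow_mul]
      simp only [eval_C_mul, eval_mul_X_pow, eval_pow, eval_X, eval_C]
      rw [myConjPow _ t hc k]
      have h1 : q.eval t * t ^ k * (q.eval t)⁻¹ * q.eval t = q.eval t * t ^ k := by
        rw [mul_assoc, inv_mul_cancel₀ hc, mul_one]
      rw [mul_assoc a, h1]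

private lemma star_conj (p : Quaternion ℝ) :
    ∃ h : Quaternion ℝ, h ≠ 0 ∧ star p = h * p * h⁻¹ := by
  have key : ∀ h : Quaternion ℝ, h ≠ 0 → h * p = star p * h → star p = h * p * h⁻¹ := by
    intro h hh he
    rw [he, mul_assoc, mul_inv_cancel₀ hh, mul_one]
  by_cases hIJ : p.imI = 0 ∧ p.imJ = 0
  · by_cases hK : p.imK = 0
    · refine ⟨1, one_ne_zero, ?_⟩
      simp only [one_mul, inv_one, mul_one]
      apply Quaternion.ext <;>
        simp [Quaternion.re_star, Quaternion.imI_star, Quaternion.imJ_star,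
          Quaternion.imK_star, hIJ.1, hIJ.2, hK]
    · refine ⟨⟨0, 1, 0, 0⟩, ?_, key _ ?_ ?_⟩
      · intro h0
        have h1 := congrArg QuaternionAlgebra.imI h0
        simp at h1
        exact one_ne_zero h1
      · intro h0
        have h1 := congrArg QuaternionAlgebra.imI h0
        simp at h1
        exact one_ne_zero h1
      · apply Quaternion.ext <;>
          simp [Quaternion.re_mul (a := (⟨0, 1, 0, 0⟩ : Quaternion ℝ)), Quaternion.imI_mul (a := (⟨0, 1, 0, 0⟩ : Quaternion ℝ)), Quaternion.imJ_mul (a := (⟨0, 1, 0, 0⟩ : Quaternion ℝ)),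
            Quaternion.imK_mul (a := (⟨0, 1, 0, 0⟩ : Quaternion ℝ)), Quaternion.re_mul (b := (⟨0, 1, 0, 0⟩ : Quaternion ℝ)), Quaternion.imI_mul (b := (⟨0, 1, 0, 0⟩ : Quaternion ℝ)), Quaternion.imJ_mul (b := (⟨0, 1, 0, 0⟩ : Quaternion ℝ)), Quaternion.imK_mul (b := (⟨0, 1, 0, 0⟩ : Quaternion ℝ)), Quaternion.re_star, Quaternion.imI_star,
            Quaternion.imJ_star, Quaternion.imK_star, hIJ.1, hIJ.2]
  · refine ⟨⟨0, p.imJ, -p.imI, 0⟩, ?_, key _ ?_ ?_⟩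
    · intro h0
      have h1 := congrArg QuaternionAlgebra.imI h0
      have h2 := congrArg QuaternionAlgebra.imJ h0
      simp at h1 h2
      exact hIJ ⟨neg_eq_zero.mp h2, h1⟩
    · intro h0
      have h1 := congrArg QuaternionAlgebra.imI h0
      have h2 := congrArg QuaternionAlgebra.imJ h0
      simp at h1 h2
      exact hIJ ⟨neg_eq_zero.mp h2, h1⟩
    · apply Quaternion.ext <;>
        simp [Quaternion.re_mul (a := (⟨0, p.imJ, -p.imI, 0⟩ : Quaternion ℝ)), Quaternion.imI_mul (a := (⟨0, p.imJ, -p.imI, 0⟩ : Quaternion ℝ)), Quaternion.imJ_mul (a := (⟨0, p.imJ, -p.imI, 0⟩ : Quaternion ℝ)),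
          Quaternion.imK_mul (a := (⟨0, p.imJ, -p.imI, 0⟩ : Quaternion ℝ)), Quaternion.re_mul (b := (⟨0, p.imJ, -p.imI, 0⟩ : Quaternion ℝ)), Quaternion.imI_mul (b := (⟨0, p.imJ, -p.imI, 0⟩ : Quaternion ℝ)), Quaternion.imJ_mul (b := (⟨0, p.imJ, -p.imI, 0⟩ : Quaternion ℝ)), Quaternion.imK_mul (b := (⟨0, p.imJ, -p.imI, 0⟩ : Quaternion ℝ)), Quaternion.re_star, Quaternion.imI_star,
          Quaternion.imJ_star, Quaternion.imK_star] <;> ring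

private lemma quad_rel (p h : Quaternion ℝ) (hh : h ≠ 0) :
    (h * p * h⁻¹) * (h * p * h⁻¹) = (p + star p) * (h * p * h⁻¹) - p * star p := by
  have hc1 : (p + star p) * h = h * (p + star p) := by
    rw [Quaternion.self_add_star']
    exact Quaternion.coe_commutes _ _
  have hc0 : h * (p * star p) * h⁻¹ = p * star p := by
    rw [Quaternion.self_mul_star, ← Quaternion.coe_commutes, mul_assoc,
      mul_inv_cancel₀ hh, mul_one]
  have expand : (h * p * h⁻¹) * (h * p * h⁻¹) = h * (p * p) * h⁻¹ := by
    have h1 : h⁻¹ * (h * p * h⁻¹) = p * h⁻¹ := by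
      rw [← mul_assoc, ← mul_assoc, inv_mul_cancel₀ hh, one_mul]
    rw [mul_assoc (h * p), h1]
    noncomm_ring
  have h2 : (p + star p) * (h * p * h⁻¹) = h * ((p + star p) * p) * h⁻¹ := by
    rw [show h * p * h⁻¹ = h * (p * h⁻¹) from by noncomm_ring, ← mul_assoc, hc1]
    noncomm_ring
  have h3 : star p * p = p * star p := by
    rw [Quaternion.star_mul_self, Quaternion.self_mul_star]
  rw [expand, h2, ← hc0]
  have h4 : (p + star p) * p = p * p + p * star p := by
    rw [add_mul, h3]
  rw [h4]
  noncomm_ring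

private lemma key_lemma (a : Quaternion ℝ) (l : List (Quaternion ℝ)) :
    ∃ q : Quaternion ℝ, (∃ h : Quaternion ℝ, h ≠ 0 ∧ q = h * a * h⁻¹) ∧
      ((X - C a) * (l.map fun b => X - C b).prod).eval q = 0 := by
  induction l using List.reverseRecOn with
  | nil =>
      exact ⟨a, ⟨1, one_ne_zero, by simp⟩, by simp⟩
  | append_singleton l b ih =>
      obtain ⟨p, ⟨g, hg, hp⟩, hroot⟩ := ih
      set T : Polynomial (Quaternion ℝ) := (X - C a) * (l.map fun b => X - C b).prod with hT
      have hsplit : (X - C a) * ((l ++ [b]).map fun b => X - C b).prod = T * (X - C b) := by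
        rw [List.map_append, List.prod_append, hT]
        simp [mul_assoc]
      rw [hsplit]
      by_cases hM : star p - b = 0
      · -- b = star p, take q = b
        obtain ⟨h', hh', hsp⟩ := star_conj p
        have hb : b = star p := (sub_eq_zero.mp hM).symm
        refine ⟨b, ⟨h' * g, mul_ne_zero hh' hg, ?_⟩, ?_⟩
        · rw [hb, hsp, hp, mul_inv_rev]
          noncomm_ring
        · apply evalA
          simp
      · -- take q = M⁻¹ p M with M = star p - b
        set M : Quaternion ℝ := star p - b with hMdef
        set t : Quaternion ℝ := M⁻¹ * p * M with htdef
        have hMt : M * t = p * M := by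
          rw [htdef, ← mul_assoc, ← mul_assoc, mul_inv_cancel₀ hM, one_mul]
        have htconj : t = M⁻¹ * p * (M⁻¹)⁻¹ := by rw [inv_inv]
        refine ⟨t, ⟨M⁻¹ * g, mul_ne_zero (inv_ne_zero hM) hg, ?_⟩, ?_⟩
        · rw [htconj, hp, mul_inv_rev, inv_inv]
          noncomm_ring
        · by_cases hc : t - b = 0
          · apply evalA
            simpa [sub_eq_zero] using hc
          · have heval : eval t (X - C b) = t - b := by simp
            have hBB := evalB T (X - C b) t (by rw [heval]; exact hc)
            rw [hBB, heval]
            have hquad : t * t = (p + star p) * t - p * star p := by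
              rw [htconj]
              exact quad_rel p M⁻¹ (inv_ne_zero hM)
            have hkey : (t - b) * t = p * (t - b) := by
              calc (t - b) * t = t * t - b * t := by noncomm_ring
                _ = ((p + star p) * t - p * star p) - b * t := by rw [hquad]
                _ = (star p - b) * t + (p * t - p * star p) := by noncomm_ring
                _ = p * (star p - b) + (p * t - p * star p) := by rw [← hMdef, hMt]
                _ = p * (t - b) := by noncomm_ring
            have hconj : (t - b) * t * (t - b)⁻¹ = p := by
              rw [hkey, mul_assoc, mul_inv_cancel₀ hc, mul_one]
            rw [hconj, hroot, zero_mul]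

theorem each_class_contains_zero (n : ℕ) (x : Fin n → Quaternion ℝ)
    (P : Polynomial (Quaternion ℝ))
    (hP : P = (List.ofFn fun i : Fin n => Polynomial.X - Polynomial.C (x i)).prod) :
    ∀ i : Fin n, ∃ q : Quaternion ℝ,
      (∃ h : Quaternion ℝ, h ≠ 0 ∧ q = h * x i * h⁻¹) ∧ P.eval q = 0 := by
  intro i
  set L : List (Quaternion ℝ) := List.ofFn x with hL
  have hofn : (List.ofFn fun i : Fin n => Polynomial.X - Polynomial.C (x i))
      = L.map fun b => X - C b := by
    rw [hL, List.map_ofFn]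
    rfl
  have hiL : (i : ℕ) < L.length := by simp [hL, i.isLt]
  have hdecomp : L = L.take i ++ L[(i : ℕ)] :: L.drop (i + 1) := by
    rw [List.getElem_cons_drop hiL, List.take_append_drop]
  have hget : L[(i : ℕ)] = x i := by simp [hL]
  obtain ⟨q, hq, hroot⟩ := key_lemma (x i) (L.drop (i + 1))
  refine ⟨q, hq, ?_⟩
  rw [hP, hofn]
  have hmap : L.map (fun b => X - C b)
      = (L.take i).map (fun b => X - C b)
        ++ (X - C (x i)) :: (L.drop (i + 1)).map (fun b => X - C b) := by
    conv_lhs => rw [hdecomp]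
    rw [List.map_append, List.map_cons, hget]
  rw [hmap, List.prod_append, List.prod_cons]
  exact evalA _ _ q hroot

end
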